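/- Let κ be an infinite cardinal and let G be a connected κ-regular graph. Then for every cardinal λ with 1 ≤ λ ≤ κ, G contains a spanning λ-regular subgraph. -/

import Mathlib

open Cardinal

universe u

/-- `G` is `κ`-regular: every vertex has degree (neighbourhood cardinality) exactly `κ`. -/
def SimpleGraph.CardRegular {V : Type u} (G : SimpleGraph V) (κ : Cardinal.{u}) : Prop :=
  ∀ v : V, #(G.neighborSet v) = κ

/-- `G` has no isolated vertices. -/
def SimpleGraph.NoIsolatedVerts {V : Type u} (G : SimpleGraph V) : Prop :=
  ∀ v : V, ∃ w : V, G.Adj v w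

/-- A factorization of `G`: a family of spanning subgraphs, pairwise edge-disjoint,
whose edge sets cover `E(G)`. -/
def SimpleGraph.IsFactorization {V : Type u} {ι : Type u} (G : SimpleGraph V)
    (F : ι → SimpleGraph V) : Prop :=
  (∀ i, F i ≤ G) ∧ (Pairwise fun i j => Disjoint (F i).edgeSet (F j).edgeSet) ∧
    (⋃ i, (F i).edgeSet) = G.edgeSet

/-- In the forest `F` rooted at `v₀`, `u` is a child of `w`. -/
def SimpleGraph.IsChild {V : Type u} (F : SimpleGraph V) (v₀ u w : V) : Prop :=
  F.Adj w u ∧ F.Reachable v₀ u ∧ F.dist v₀ u = F.dist v₀ w + 1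

/-- The graph with edges `v_j v_i` for `v_i ∈ C j`, `j < i`. -/
def childGraph {V I : Type u} [LT I] (v : I ≃ V) (C : I → Set V) : SimpleGraph V :=
  SimpleGraph.fromEdgeSet {e | ∃ i j : I, j < i ∧ (v i : V) ∈ C j ∧ e = s(v j, v i)}

/-- Disjoint union of `ι`-many copies of `T`. -/
def copiesGraph (ι : Type u) {W : Type u} (T : SimpleGraph W) : SimpleGraph (ι × W) where
  Adj p q := p.1 = q.1 ∧ T.Adj p.2 q.2
  symm := by constructor; rintro p q ⟨h1, h2⟩; exact ⟨h1.symm, h2.symm⟩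
  loopless := by constructor; rintro p ⟨-, h⟩; exact T.ne_of_adj h rfl


lemma mk_diff_eq' {V : Type u} {κ : Cardinal.{u}} (hκ : ℵ₀ ≤ κ) {S T : Set V}
    (hS : #S = κ) (hT : #T < κ) : #(S \ T : Set V) = κ := by
  refine le_antisymm (hS ▸ mk_le_mk_of_subset Set.diff_subset) ?_
  by_contra h
  push_neg at h
  have h1 : #S ≤ #((S \ T) ∪ T : Set V) := mk_le_mk_of_subset (by
    intro x hx
    by_cases hxT : x ∈ T
    · exact Or.inr hxT
    · exact Or.inl ⟨hx, hxT⟩)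
  have h2 := h1.trans (mk_union_le _ _)
  rw [hS] at h2
  exact absurd h2 (not_le.mpr (add_lt_of_lt hκ h hT))

lemma exists_matching' {V : Type u} {κ : Cardinal.{u}} (hκ : ℵ₀ ≤ κ)
    (r : V → V → Prop) [hwo : IsWellOrder V r] (hsmall : ∀ v : V, #{u | ¬ r v u} < κ)
    (H : SimpleGraph V) (hdeg : ∀ v, #(H.neighborSet v) = κ) :
    ∃ f : V → V, (∀ v, H.Adj v (f v)) ∧ ∀ v, f (f v) = v := by
  classical
  set P : ∀ v : V, (∀ u, r u v → V) → V → Prop := fun v ih w =>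
    (∃ hu : r w v, ih w hu = v) ∨
    ((¬ ∃ u, ∃ hu : r u v, ih u hu = v) ∧ H.Adj v w ∧ r v w ∧
      ∀ u (hu : r u v), ih u hu ≠ w) with hPdef
  have hex : ∀ v ih, ∃ w, P v ih w := by
    intro v ih
    by_cases h : ∃ u, ∃ hu : r u v, ih u hu = v
    · obtain ⟨u, hu, h⟩ := h
      exact ⟨u, Or.inl ⟨hu, h⟩⟩
    · set E : Set V := {x | ¬ r v x} ∪ Set.range (fun u : {u // r u v} => ih u.1 u.2) with hE
      have hElt : #E < κ := by
        refine (mk_union_le _ _).trans_lt (add_lt_of_lt hκ (hsmall v) ?_)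
        refine mk_range_le.trans_lt (lt_of_le_of_lt (mk_le_mk_of_subset ?_) (hsmall v))
        intro u hu
        exact asymm hu
      have hne : (H.neighborSet v \ E).Nonempty := by
        rw [← Set.nonempty_coe_sort, ← mk_ne_zero_iff, mk_diff_eq' hκ (hdeg v) hElt]
        exact (aleph0_pos.trans_le hκ).ne'
      obtain ⟨w, hwN, hwE⟩ := hne
      refine ⟨w, Or.inr ⟨h, hwN, ?_, ?_⟩⟩
      · by_contra hrvw
        exact hwE (Or.inl hrvw)
      · intro u hu heq
        exact hwE (Or.inr ⟨⟨u, hu⟩, heq⟩)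
  have wf : WellFounded r := hwo.wf
  set g : V → V := wf.fix (C := fun _ => V) (fun v ih => (hex v ih).choose) with hg
  have geq : ∀ v, g v = (hex v (fun u _ => g u)).choose := fun v => wf.fix_eq _ v
  have gspec : ∀ v, P v (fun u _ => g u) (g v) := by
    intro v
    rw [geq v]
    exact (hex v _).choose_spec
  simp only [hPdef] at gspec
  have ginv : ∀ v, g (g v) = v := by
    intro v
    rcases gspec v with ⟨hu, h2⟩ | ⟨hprop, hN, hvw, hfresh⟩
    · exact h2
    · rcases gspec (g v) with ⟨hu0, h2⟩ | ⟨propw, -, -, -⟩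
      · -- hu0 : r (g (g v)) (g v), h2 : g (g (g v)) = g v ; goal g (g v) = v
        rcases trichotomous_of r (g (g v)) v with hlt | heq | hgt
        · exact absurd h2 (hfresh _ hlt)
        · exact heq
        · rcases gspec (g (g v)) with ⟨hu1, -⟩ | ⟨-, -, -, fresh'⟩
          · rw [h2] at hu1
            exact absurd hu0 (asymm hu1)
          · exact absurd h2.symm (fresh' v hgt)
      · exact absurd ⟨v, hvw, rfl⟩ propw
  have gadj : ∀ v, H.Adj v (g v) := by
    intro v
    rcases gspec v with ⟨hu, h2⟩ | ⟨-, hN, -, -⟩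
    · rcases gspec (g v) with ⟨hu', -⟩ | ⟨-, hN', -, -⟩
      · rw [h2] at hu'
        exact absurd hu (asymm hu')
      · rw [h2] at hN'
        exact hN'.symm
    · exact hN
  exact ⟨g, gadj, ginv⟩

lemma mk_le_of_connected' {V : Type u} {κ : Cardinal.{u}} (hκ : ℵ₀ ≤ κ) (G : SimpleGraph V)
    (hconn : G.Connected) (hreg : ∀ v, #(G.neighborSet v) = κ) : #V ≤ κ := by
  obtain ⟨v₀⟩ := hconn.nonempty
  let S : ℕ → Set V := fun n => Nat.rec {v₀} (fun _ Sn => Sn ∪ ⋃ x : Sn, G.neighborSet x.1) n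
  have hSsucc : ∀ n, S (n + 1) = S n ∪ ⋃ x : S n, G.neighborSet x.1 := fun n => rfl
  have hcard : ∀ n, #↥(S n) ≤ κ := by
    intro n
    induction n with
    | zero =>
      have : #↥(S 0) = 1 := by simp [S]
      rw [this]
      exact one_le_aleph0.trans hκ
    | succ n ih =>
      rw [hSsucc]
      refine (mk_union_le _ _).trans ?_
      have h2 : #↥(⋃ x : S n, G.neighborSet x.1) ≤ κ := by
        refine (mk_iUnion_le _).trans ?_
        have hs : ⨆ x : S n, #(G.neighborSet x.1) ≤ κ := ciSup_le' fun x => (hreg x.1).le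
        calc #↥(S n) * ⨆ x : S n, #(G.neighborSet x.1) ≤ κ * κ := mul_le_mul' ih hs
          _ = κ := mul_eq_self hκ
      exact (add_le_add ih h2).trans (add_eq_self hκ).le
  have key : ∀ (a b : V) (w : G.Walk a b) (n : ℕ), a ∈ S n → b ∈ S (n + w.length) := by
    intro a b w
    induction w with
    | nil => intro n h; simpa using h
    | @cons a c b h p ih =>
      intro n ha
      have hc : c ∈ S (n + 1) := by
        rw [hSsucc]
        exact Or.inr (Set.mem_iUnion.mpr ⟨⟨a, ha⟩, h⟩)
      have := ih (n + 1) hc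
      have harith : n + (SimpleGraph.Walk.cons h p).length = n + 1 + p.length := by
        rw [SimpleGraph.Walk.length_cons]; omega
      rw [harith]
      exact this
  have hcover : ⋃ n, S n = Set.univ := by
    rw [Set.iUnion_eq_univ_iff]
    intro u
    obtain ⟨w⟩ := hconn v₀ u
    refine ⟨w.length, ?_⟩
    have := key v₀ u w 0 (by simp [S])
    simpa using this
  have hre : (⋃ n, S n) = ⋃ m : ULift.{u} ℕ, S m.down := by
    ext x
    simp only [Set.mem_iUnion]
    exact ⟨fun ⟨n, hn⟩ => ⟨⟨n⟩, hn⟩, fun ⟨m, hm⟩ => ⟨m.down, hm⟩⟩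
  calc #V = #↥(⋃ m : ULift.{u} ℕ, S m.down) := by rw [← hre, hcover, mk_univ]
    _ ≤ #(ULift.{u} ℕ) * ⨆ m : ULift.{u} ℕ, #↥(S m.down) := mk_iUnion_le _
    _ ≤ κ * κ := mul_le_mul' (by simpa using hκ) (ciSup_le' fun m => hcard m.down)
    _ = κ := mul_eq_self hκ
/-- Every connected `κ`-regular graph contains a spanning `λ`-regular subgraph for every
cardinal `1 ≤ λ ≤ κ`. -/
theorem stmt_18 (κ lam : Cardinal.{u}) (hκ : ℵ₀ ≤ κ) (hlam1 : 1 ≤ lam) (hlamκ : lam ≤ κ)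
    {V : Type u} (G : SimpleGraph V) (hconn : G.Connected) (hreg : G.CardRegular κ) :
    ∃ F : SimpleGraph V, F ≤ G ∧ F.CardRegular lam := by
  classical
  -- a well-order on V all of whose initial segments are small
  have hVle : #V ≤ κ := mk_le_of_connected' hκ G hconn hreg
  have hVle' : #V ≤ #(κ.ord.ToType) := by rwa [mk_ord_toType]
  obtain ⟨φ⟩ := (Cardinal.le_def _ _).mp hVle'
  let r : V → V → Prop := fun u v => φ u < φ v
  haveI hwoι : IsWellOrder κ.ord.ToType (· < ·) := isWellOrder_lt
  haveI hwo : IsWellOrder V r :=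
    RelEmbedding.isWellOrder
      (RelEmbedding.mk φ (fun {a b} => Iff.rfl) :
        r ↪r ((· < ·) : κ.ord.ToType → κ.ord.ToType → Prop))
  have hsmall : ∀ v : V, #{u | ¬ r v u} < κ := by
    intro v
    have h1 : #{u | ¬ r v u} ≤ #(Set.Iic (φ v)) := by
      refine mk_le_of_injective
        (f := fun u : {u | ¬ r v u} => (⟨φ u.1, not_lt.mp u.2⟩ : Set.Iic (φ v))) ?_
      intro a b hab
      exact Subtype.ext (φ.injective (congrArg Subtype.val hab))
    refine h1.trans_lt ?_
    have h2 : Set.Iic (φ v) = Set.Iio (φ v) ∪ {φ v} := by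
      ext x
      simp [le_iff_lt_or_eq]
    rw [h2]
    refine (mk_union_le _ _).trans_lt (add_lt_of_lt hκ (mk_Iio_toType_ord_lt _) ?_)
    rw [mk_singleton]
    exact one_lt_aleph0.trans_le hκ
  -- index type for the lam-many matchings
  set ι := lam.ord.ToType with hι
  -- the graph available at stage i, given earlier matchings
  let Sub : Type u := {f : V → V // ∀ v, f (f v) = v}
  let HG : ∀ i : ι, (∀ j : ι, j < i → Sub) → SimpleGraph V := fun i ih =>
    { Adj := fun u w => G.Adj u w ∧ ∀ j (hj : j < i), (ih j hj).1 u ≠ w ∧ (ih j hj).1 w ≠ u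
      symm := by
        constructor
        rintro u w ⟨h1, h2⟩
        exact ⟨h1.symm, fun j hj => ⟨(h2 j hj).2, (h2 j hj).1⟩⟩
      loopless := ⟨fun v h => G.loopless.irrefl v h.1⟩ }
  have hexM : ∀ (i : ι) (ih : ∀ j : ι, j < i → Sub),
      ∃ f : Sub, ∀ v, (HG i ih).Adj v (f.1 v) := by
    intro i ih
    have hdeg : ∀ v, #((HG i ih).neighborSet v) = κ := by
      intro v
      have hset : (HG i ih).neighborSet v =
          G.neighborSet v \ Set.range (fun j : Set.Iio i => (ih j.1 j.2).1 v) := by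
        ext w
        constructor
        · rintro ⟨h1, h2⟩
          refine ⟨h1, ?_⟩
          rintro ⟨⟨j, hj⟩, hjw⟩
          exact (h2 j hj).1 hjw
        · rintro ⟨h1, h2⟩
          refine ⟨h1, fun j hj => ⟨fun he => h2 ⟨⟨j, hj⟩, he⟩, fun he => ?_⟩⟩
          have : (ih j hj).1 ((ih j hj).1 w) = (ih j hj).1 v := congrArg _ he
          rw [(ih j hj).2 w] at this
          exact h2 ⟨⟨j, hj⟩, this.symm⟩
      rw [hset]
      refine mk_diff_eq' hκ (hreg v) ?_
      exact mk_range_le.trans_lt ((mk_Iio_toType_ord_lt i).trans_le hlamκ)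
    obtain ⟨f, hadj, hinv⟩ := exists_matching' hκ r hsmall (HG i ih) hdeg
    exact ⟨⟨f, hinv⟩, hadj⟩
  have wfι : WellFounded ((· < ·) : ι → ι → Prop) := wellFounded_lt
  set M' : ∀ _ : ι, Sub := wfι.fix (C := fun _ => Sub) (fun i ih => (hexM i ih).choose) with hM'
  have Meq : ∀ i, M' i = (hexM i (fun j _ => M' j)).choose := fun i => wfι.fix_eq _ i
  have Mspec : ∀ i v, (HG i (fun j _ => M' j)).Adj v ((M' i).1 v) := by
    intro i
    have := (hexM i (fun j _ => M' j)).choose_spec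
    rwa [← Meq i] at this
  let Mf : ι → V → V := fun i => (M' i).1
  have Minv : ∀ i v, Mf i (Mf i v) = v := fun i => (M' i).2
  have Madj : ∀ i v, G.Adj v (Mf i v) := fun i v => (Mspec i v).1
  have Mdisj : ∀ i j v, j < i → Mf j v ≠ Mf i v := fun i j v hj => ((Mspec i v).2 j hj).1
  let F : SimpleGraph V :=
    { Adj := fun u w => ∃ i, Mf i u = w
      symm := by constructor; rintro u w ⟨i, rfl⟩; exact ⟨i, Minv i u⟩
      loopless := by
        constructor
        rintro v ⟨i, hi⟩
        have h := Madj i v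
        rw [hi] at h
        exact G.loopless.irrefl v h }
  refine ⟨F, ?_, ?_⟩
  · rintro u w ⟨i, rfl⟩
    exact Madj i u
  · intro v
    have hset : F.neighborSet v = Set.range (fun i : ι => Mf i v) := by
      ext w
      exact ⟨fun ⟨i, hi⟩ => ⟨i, hi⟩, fun ⟨i, hi⟩ => ⟨i, hi⟩⟩
    rw [hset, mk_range_eq _ ?_, hι, mk_ord_toType]
    intro i j hij
    rcases lt_trichotomy i j with h | h | h
    · exact absurd hij (Mdisj j i v h)
    · exact h
    · exact absurd hij.symm (Mdisj i j v h)
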